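/- Let X ~ N(0, σ²) with σ > 0 and let ε ∈ (0,1). Then CVaR_ε[-|X|] = κ·σ, where κ = (1/(1-ε))·√(2/π)·(exp(-(erf⁻¹(ε-1))²) - 1); equivalently, if t is the unique real with erf(t) = ε - 1, then CVaR_ε[-|X|] = (1/(1-ε))·√(2/π)·σ·(exp(-t²) - 1). -/

import Mathlib

open MeasureTheory ProbabilityTheory Real
open scoped NNReal ENNReal

/-- The Gaussian measure on ℝ with mean `μ` and standard deviation `σ`. -/
noncomputable def gaussMeas (μ σ : ℝ) : Measure ℝ :=
  gaussianReal μ ⟨σ ^ 2, sq_nonneg σ⟩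

/-- The Gauss error function `erf(t) = (2/√π)·∫₀ᵗ exp(-s²) ds`. -/
noncomputable def erf (t : ℝ) : ℝ :=
  (2 / Real.sqrt Real.pi) * ∫ s in (0 : ℝ)..t, Real.exp (-s ^ 2)

/-- The conditional value-at-risk of a function `Y` of a random variable with law `P`,
at level `ε`, given that `k` is the value-at-risk `VaR_ε[Y]`:
`CVaR_ε[Y] = (1/(1-ε))·E[Y·1{Y ≥ k}]`. -/
noncomputable def cvar (P : Measure ℝ) (ε : ℝ) (Y : ℝ → ℝ) (k : ℝ) : ℝ :=
  (1 / (1 - ε)) * ∫ x in {x | k ≤ Y x}, Y x ∂P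

lemma erf_aux_neg (t : ℝ) :
    (∫ s in (0:ℝ)..(-t), Real.exp (-s ^ 2)) = -∫ s in (0:ℝ)..t, Real.exp (-s ^ 2) := by
  have h := intervalIntegral.integral_comp_neg (a := t) (b := 0) (fun x => Real.exp (-x ^ 2))
  simp only [neg_sq, neg_zero] at h
  rw [← h, intervalIntegral.integral_symm]

lemma erf_neg (t : ℝ) : erf (-t) = - erf t := by
  unfold erf; rw [erf_aux_neg]; ring

lemma erf_strictMono : StrictMono erf := by
  intro x y hxy
  unfold erf
  have hi : ∀ u v : ℝ, IntervalIntegrable (fun s => Real.exp (-s ^ 2)) volume u v :=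
    fun u v => (Real.continuous_exp.comp (by continuity)).intervalIntegrable u v
  have hsplit : (∫ s in (0:ℝ)..x, Real.exp (-s ^ 2)) + (∫ s in x..y, Real.exp (-s ^ 2))
      = ∫ s in (0:ℝ)..y, Real.exp (-s ^ 2) :=
    intervalIntegral.integral_add_adjacent_intervals (hi 0 x) (hi x y)
  have hpos : 0 < ∫ s in x..y, Real.exp (-s ^ 2) :=
    intervalIntegral.intervalIntegral_pos_of_pos (hi x y) (fun s => Real.exp_pos _) hxy
  have h2 : (0:ℝ) < 2 / Real.sqrt Real.pi := by positivity
  nlinarith [h2, hpos]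

lemma erf_zero' : erf 0 = 0 := by simp [erf]

lemma integral_even {f : ℝ → ℝ} (hc : Continuous f) (hf : ∀ x, f (-x) = f x) (a : ℝ) :
    (∫ x in (-a)..a, f x) = 2 * ∫ x in (0:ℝ)..a, f x := by
  have h := intervalIntegral.integral_comp_neg (a := 0) (b := a) f
  simp only [hf, neg_zero] at h
  rw [← intervalIntegral.integral_add_adjacent_intervals (a := -a) (b := 0) (c := a)
      (hc.intervalIntegrable _ _) (hc.intervalIntegrable _ _), ← h]
  ring

lemma integral_x_exp (σ a : ℝ) (hσ : 0 < σ) :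
    (∫ x in (0:ℝ)..a, x * Real.exp (-x ^ 2 / (2 * σ ^ 2)))
      = σ ^ 2 * (1 - Real.exp (-a ^ 2 / (2 * σ ^ 2))) := by
  have hderiv : ∀ x : ℝ, HasDerivAt (fun y => -σ ^ 2 * Real.exp (-y ^ 2 / (2 * σ ^ 2)))
      (x * Real.exp (-x ^ 2 / (2 * σ ^ 2))) x := by
    intro x
    have h1 : HasDerivAt (fun y : ℝ => -y ^ 2 / (2 * σ ^ 2)) (-(2 * x) / (2 * σ ^ 2)) x := by
      have := ((hasDerivAt_pow 2 x).neg).div_const (2 * σ ^ 2)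
      simpa using this
    have h2 := (h1.exp).const_mul (-σ ^ 2)
    refine h2.congr_deriv ?_
    have hσ' : σ ≠ 0 := hσ.ne'
    field_simp
  rw [intervalIntegral.integral_eq_sub_of_hasDerivAt (fun x _ => hderiv x)
      (((continuous_id.mul (Real.continuous_exp.comp (by continuity))).intervalIntegrable _ _))]
  simp
  ring

lemma gauss_setIntegral (v : ℝ≥0) (hv : v ≠ 0) {s : Set ℝ} (hs : MeasurableSet s) (g : ℝ → ℝ) :
    ∫ x in s, g x ∂(gaussianReal 0 v) = ∫ x in s, gaussianPDFReal 0 v x * g x := by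
  rw [gaussianReal_of_var_ne_zero _ hv]
  have h1 : (volume.withDensity (gaussianPDF 0 v))
      = volume.withDensity (fun x => ((gaussianPDFReal 0 v x).toNNReal : ℝ≥0∞)) := rfl
  rw [h1, setIntegral_withDensity_eq_setIntegral_smul
      ((measurable_gaussianPDFReal 0 v).real_toNNReal) g hs]
  refine setIntegral_congr_fun hs fun x _ => ?_
  simp [NNReal.smul_def, Real.coe_toNNReal _ (gaussianPDFReal_nonneg 0 v x)]

lemma pdf_integral_erf (σ a : ℝ) (hσ : 0 < σ) :
    (∫ x in (-a)..a, (Real.sqrt (2 * π * σ ^ 2))⁻¹ * Real.exp (-x ^ 2 / (2 * σ ^ 2)))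
      = erf (a / (σ * Real.sqrt 2)) := by
  have hs2 : (0:ℝ) < Real.sqrt 2 := by positivity
  have hsπ : (0:ℝ) < Real.sqrt π := Real.sqrt_pos.mpr Real.pi_pos
  have hc : σ * Real.sqrt 2 ≠ 0 := by positivity
  rw [intervalIntegral.integral_const_mul]
  have h1 : (∫ x in (-a)..a, Real.exp (-x ^ 2 / (2 * σ ^ 2)))
      = ∫ x in (-a)..a, (fun s => Real.exp (-s ^ 2)) (x / (σ * Real.sqrt 2)) := by
    refine intervalIntegral.integral_congr fun x _ => ?_
    congr 1
    rw [div_pow, mul_pow, Real.sq_sqrt (by norm_num : (0:ℝ) ≤ 2)]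
    ring
  rw [h1, intervalIntegral.integral_comp_div (a := -a) (b := a) (c := σ * Real.sqrt 2)
      (fun s => Real.exp (-s ^ 2)) hc]
  rw [neg_div, integral_even (by continuity) (fun x => by rw [neg_sq]) _]
  have hsqrt : Real.sqrt (2 * π * σ ^ 2) = Real.sqrt 2 * Real.sqrt π * σ := by
    rw [Real.sqrt_mul (by positivity), Real.sqrt_mul (by norm_num), Real.sqrt_sq hσ.le]
  rw [hsqrt]
  unfold erf
  rw [smul_eq_mul]
  field_simp

/-- For `X ~ N(0, σ²)` with `σ > 0` and `ε ∈ (0,1)`, one has `CVaR_ε[-|X|] = κ·σ`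
with `κ = (1/(1-ε))·√(2/π)·(exp(-(erf⁻¹(ε-1))²) - 1)`: if `t` is the unique real with
`erf t = ε - 1` and `k = VaR_ε[-|X|]`, then
`CVaR_ε[-|X|] = (1/(1-ε))·√(2/π)·σ·(exp(-t²) - 1)`. -/
theorem cvar_neg_abs_centered_eq
    (σ ε k t : ℝ) (hσ : 0 < σ) (hε : ε ∈ Set.Ioo (0 : ℝ) 1)
    (hk : gaussMeas 0 σ {x | -|x| ≤ k} = ENNReal.ofReal ε)
    (ht : erf t = ε - 1) :
    cvar (gaussMeas 0 σ) ε (fun x => -|x|) k =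
      (1 / (1 - ε)) * Real.sqrt (2 / Real.pi) * σ * (Real.exp (-t ^ 2) - 1) := by
  obtain ⟨hε0, hε1⟩ := hε
  have hσ2 : (0:ℝ) < σ ^ 2 := by positivity
  set v : ℝ≥0 := ⟨σ ^ 2, sq_nonneg σ⟩ with hv_def
  haveI : IsProbabilityMeasure (gaussMeas 0 σ) :=
    inferInstanceAs (IsProbabilityMeasure (gaussianReal 0 v))
  have hv : v ≠ 0 := fun h => (pow_ne_zero 2 hσ.ne') (congrArg NNReal.toReal h)
  have hvr : (v : ℝ) = σ ^ 2 := rfl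
  have hPmeas : gaussMeas 0 σ = gaussianReal 0 v := rfl
  -- k < 0
  have hk0 : k < 0 := by
    by_contra h
    push_neg at h
    have huniv : {x : ℝ | -|x| ≤ k} = Set.univ := by
      ext x
      simp only [Set.mem_setOf_eq, Set.mem_univ, iff_true]
      have : -|x| ≤ 0 := neg_nonpos.mpr (abs_nonneg x)
      linarith
    rw [huniv, hPmeas, measure_univ] at hk
    have hlt : ENNReal.ofReal ε < 1 := by
      rw [show (1:ℝ≥0∞) = ENNReal.ofReal 1 by simp]
      exact ENNReal.ofReal_lt_ofReal_iff (by norm_num) |>.mpr hε1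
    exact absurd hk hlt.ne'
  set a := -k with ha_def
  have ha : 0 < a := by simp [ha_def]; linarith
  have haa : -a ≤ a := by linarith
  set c := (Real.sqrt (2 * π * σ ^ 2))⁻¹ with hc_def
  have hpdf : ∀ x : ℝ, gaussianPDFReal 0 v x = c * Real.exp (-x ^ 2 / (2 * σ ^ 2)) := by
    intro x
    simp only [gaussianPDFReal, hvr, sub_zero, hc_def]
  -- complement set
  have hSmeas : MeasurableSet {x : ℝ | -|x| ≤ k} :=
    measurableSet_le (measurable_abs.neg) measurable_const
  have hSc : {x : ℝ | -|x| ≤ k}ᶜ = Set.Ioo (-a) a := by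
    ext x
    simp only [Set.mem_compl_iff, Set.mem_setOf_eq, not_le, Set.mem_Ioo, ← abs_lt]
    rw [lt_neg]
  -- measure of Ioo equals 1 - ε
  have hmeq : gaussianReal 0 v (Set.Ioo (-a) a) = ENNReal.ofReal (1 - ε) := by
    have hcompl := measure_compl hSmeas (measure_ne_top (gaussMeas 0 σ) _)
    rw [hSc, hk, measure_univ] at hcompl
    rw [← hPmeas, hcompl, ← ENNReal.ofReal_one, ← ENNReal.ofReal_sub _ hε0.le]
  -- express through erf
  have hpdfint : (∫ x in Set.Ioo (-a) a, gaussianPDFReal 0 v x)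
      = erf (a / (σ * Real.sqrt 2)) := by
    rw [← MeasureTheory.integral_Ioc_eq_integral_Ioo,
      ← intervalIntegral.integral_of_le haa]
    simp_rw [hpdf]
    exact pdf_integral_erf σ a hσ
  have herf : erf (a / (σ * Real.sqrt 2)) = 1 - ε := by
    rw [gaussianReal_apply_eq_integral 0 hv, hpdfint] at hmeq
    have h1 : (0:ℝ) ≤ erf (a / (σ * Real.sqrt 2)) := by
      rw [← erf_zero']
      exact (erf_strictMono.monotone (by positivity))
    exact (ENNReal.ofReal_eq_ofReal_iff h1 (by linarith)).mp hmeq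
  -- a / (σ√2) = -t
  have ht' : a / (σ * Real.sqrt 2) = -t := by
    apply erf_strictMono.injective
    rw [herf, erf_neg, ht]; ring
  have hcne : σ * Real.sqrt 2 ≠ 0 := by positivity
  have ha2 : a = -t * (σ * Real.sqrt 2) := by
    rw [← ht']; field_simp
  have ht2 : -a ^ 2 / (2 * σ ^ 2) = -t ^ 2 := by
    rw [ha2]
    rw [mul_pow, mul_pow, Real.sq_sqrt (by norm_num : (0:ℝ) ≤ 2)]
    rw [div_eq_iff (by positivity : (2:ℝ) * σ ^ 2 ≠ 0)]
    ring
  -- the main integral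
  have hSet : {x : ℝ | k ≤ -|x|} = Set.Icc (-a) a := by
    ext x
    simp only [Set.mem_setOf_eq, Set.mem_Icc, ← abs_le]
    rw [le_neg]
  simp only [cvar]
  rw [hSet, hPmeas, gauss_setIntegral v hv measurableSet_Icc]
  have hint : (∫ x in Set.Icc (-a) a, gaussianPDFReal 0 v x * (-|x|))
      = 2 * ∫ x in (0:ℝ)..a, c * Real.exp (-x ^ 2 / (2 * σ ^ 2)) * (-x) := by
    rw [MeasureTheory.integral_Icc_eq_integral_Ioc, ← intervalIntegral.integral_of_le haa]
    simp_rw [hpdf]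
    have hcont : Continuous (fun x : ℝ => c * Real.exp (-x ^ 2 / (2 * σ ^ 2)) * (-|x|)) := by
      have h1 : Continuous fun x : ℝ => -x ^ 2 / (2 * σ ^ 2) := by fun_prop
      exact (continuous_const.mul (Real.continuous_exp.comp h1)).mul continuous_abs.neg
    have heven : ∀ x : ℝ, (fun x : ℝ => c * Real.exp (-x ^ 2 / (2 * σ ^ 2)) * (-|x|)) (-x)
        = (fun x : ℝ => c * Real.exp (-x ^ 2 / (2 * σ ^ 2)) * (-|x|)) x := by
      intro x; simp [neg_sq]
    rw [integral_even hcont heven a]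
    congr 1
    refine intervalIntegral.integral_congr fun x hx => ?_
    rw [Set.uIcc_of_le ha.le] at hx
    rw [abs_of_nonneg hx.1]
  rw [hint]
  have hx2 : (∫ x in (0:ℝ)..a, c * Real.exp (-x ^ 2 / (2 * σ ^ 2)) * (-x))
      = -(c * (σ ^ 2 * (1 - Real.exp (-a ^ 2 / (2 * σ ^ 2))))) := by
    have : (∫ x in (0:ℝ)..a, c * Real.exp (-x ^ 2 / (2 * σ ^ 2)) * (-x))
        = ∫ x in (0:ℝ)..a, (-c) * (x * Real.exp (-x ^ 2 / (2 * σ ^ 2))) := by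
      refine intervalIntegral.integral_congr fun x _ => by ring
    rw [this, intervalIntegral.integral_const_mul, integral_x_exp σ a hσ]
    ring
  rw [hx2, ht2]
  have hsqrt : Real.sqrt (2 * π * σ ^ 2) = Real.sqrt 2 * Real.sqrt π * σ := by
    rw [Real.sqrt_mul (by positivity), Real.sqrt_mul (by norm_num), Real.sqrt_sq hσ.le]
  have hsqrt2 : Real.sqrt (2 / π) = Real.sqrt 2 / Real.sqrt π :=
    Real.sqrt_div' 2 Real.pi_pos.le
  have hsπ : (0:ℝ) < Real.sqrt π := Real.sqrt_pos.mpr Real.pi_pos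
  have hs2 : (0:ℝ) < Real.sqrt 2 := by positivity
  have hεne : (1:ℝ) - ε ≠ 0 := by linarith
  rw [hc_def, hsqrt, hsqrt2]
  have h22 : Real.sqrt 2 ^ 2 = 2 := Real.sq_sqrt (by norm_num)
  field_simp
  linear_combination (1 - Real.exp (-t ^ 2)) * h22
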